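/- Monotone limits of edge weights exist: let R be a resistance metric on a countably infinite set V and (V_n) a finite exhaustion of V; let G_n = (V_n, c_n) be the unique finite connected weighted graph with effective resistance R restricted to V_n. Then for all x, y ∈ V the sequence c_n(x,y) is eventually monotonically decreasing, hence lim_{n→∞} c_n(x,y) exists in [0,∞); and the sequence (c_n)_x = Σ_{y ∈ V_n} c_n(x,y) is eventually monotonically increasing, hence lim_{n→∞} (c_n)_x exists in (0,∞]. -/

import Mathlib

noncomputable def deg {W : Type*} [Fintype W] (c : W → W → ℝ) (x : W) : ℝ := ∑ y, c x y

def IsWeight {W : Type*} (c : W → W → ℝ) : Prop :=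
  (∀ x y, 0 ≤ c x y) ∧ (∀ x y, c x y = c y x) ∧ (∀ x, c x x = 0)

def Conn {W : Type*} (c : W → W → ℝ) : Prop :=
  ∀ x y, Relation.ReflTransGen (fun a b => 0 < c a b) x y

noncomputable def lap {W : Type*} [Fintype W] (c : W → W → ℝ) (φ : W → ℝ) (x : W) : ℝ :=
  φ x - ∑ y, (c x y / deg c x) * φ y

def IsDirichlet {W : Type*} [Fintype W] [DecidableEq W] (c : W → W → ℝ) (x y : W)
    (φ : W → ℝ) : Prop :=
  (∀ z, lap c φ z =
      (if z = x then 1 / deg c x else 0) - (if z = y then 1 / deg c y else 0)) ∧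
  φ y = 0

def IsEffRes {W : Type*} [Fintype W] [DecidableEq W] (c : W → W → ℝ) (R : W → W → ℝ) : Prop :=
  (∀ x, R x x = 0) ∧ ∀ x y, x ≠ y → ∃ φ, IsDirichlet c x y φ ∧ φ x = R x y

/-! ### Combinatorial Laplacian -/

noncomputable def Lc {W : Type*} [Fintype W] (c : W → W → ℝ) (φ : W → ℝ) (x : W) : ℝ :=
  ∑ y, c x y * (φ x - φ y)

set_option linter.unusedSectionVars false

section Basic
variable {W : Type*} [Fintype W] [DecidableEq W] (c : W → W → ℝ)

theorem deg_pos_of_edge {x b : W} (hnn : ∀ a b, 0 ≤ c a b) (h : 0 < c x b) : 0 < deg c x :=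
  lt_of_lt_of_le h (Finset.single_le_sum (fun y _ => hnn x y) (Finset.mem_univ b))

theorem deg_pos (hw : IsWeight c) (hc : Conn c) {x y : W} (hxy : x ≠ y) : 0 < deg c x := by
  rcases (Relation.ReflTransGen.cases_head (hc x y)) with h | ⟨b, hb, _⟩
  · exact absurd h hxy
  · exact deg_pos_of_edge c hw.1 hb

theorem lap_eq (φ : W → ℝ) (z : W) (h : deg c z ≠ 0) :
    lap c φ z = Lc c φ z / deg c z := by
  unfold lap Lc
  rw [Finset.sum_div]
  have : ∀ y, c z y * (φ z - φ y) / deg c z = (c z y / deg c z) * φ z - (c z y / deg c z) * φ y := by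
    intro y; field_simp
  simp only [this]
  rw [Finset.sum_sub_distrib, ← Finset.sum_mul, ← Finset.sum_div]
  have hd : (∑ y, c z y) = deg c z := rfl
  rw [hd]
  field_simp

theorem rhs_eq (x y z : W) (hdeg : ∀ z, 0 < deg c z) :
    ((if z = x then 1 / deg c x else 0) - (if z = y then 1 / deg c y else 0)) =
      ((if z = x then (1:ℝ) else 0) - (if z = y then 1 else 0)) / deg c z := by
  by_cases hx : z = x
  · subst hx
    by_cases hy : z = y
    · subst hy; simp
    · simp [hy]
  · by_cases hy : z = y
    · subst hy
      simp [hx, neg_div]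
    · simp [hx, hy]

theorem dirichlet_iff_comb (hdeg : ∀ z, 0 < deg c z) (x y : W) (φ : W → ℝ) :
    IsDirichlet c x y φ ↔
      ((∀ z, Lc c φ z = (if z = x then 1 else 0) - (if z = y then 1 else 0)) ∧ φ y = 0) := by
  unfold IsDirichlet
  constructor <;> rintro ⟨h1, h2⟩ <;> refine ⟨fun z => ?_, h2⟩
  · have := h1 z
    rw [lap_eq c φ z (hdeg z).ne', rhs_eq c x y z hdeg] at this
    rw [div_eq_div_iff (hdeg z).ne' (hdeg z).ne'] at this
    exact mul_right_cancel₀ (hdeg z).ne' this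
  · rw [lap_eq c φ z (hdeg z).ne', rhs_eq c x y z hdeg, h1 z]

theorem sum_Lc_zero (hsym : ∀ a b, c a b = c b a) (φ : W → ℝ) :
    ∑ x, Lc c φ x = 0 := by
  unfold Lc
  simp only [mul_sub, Finset.sum_sub_distrib]
  have : ∑ x, ∑ y, c x y * φ y = ∑ x, ∑ y, c x y * φ x := by
    rw [Finset.sum_comm]
    refine Finset.sum_congr rfl fun x _ => Finset.sum_congr rfl fun y _ => ?_
    rw [hsym]
  rw [this, sub_self]

noncomputable def En (c : W → W → ℝ) (φ ψ : W → ℝ) : ℝ := ∑ x, Lc c φ x * ψ x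

theorem En_repr (hsym : ∀ a b, c a b = c b a) (φ ψ : W → ℝ) :
    2 * En c φ ψ = ∑ x, ∑ y, c x y * ((φ x - φ y) * (ψ x - ψ y)) := by
  have h1 : En c φ ψ = ∑ x, ∑ y, c x y * ((φ x - φ y) * ψ x) := by
    unfold En Lc
    refine Finset.sum_congr rfl fun x _ => ?_
    rw [Finset.sum_mul]
    exact Finset.sum_congr rfl fun y _ => by ring
  have h2 : En c φ ψ = -∑ x, ∑ y, c x y * ((φ x - φ y) * ψ y) := by
    rw [h1, ← Finset.sum_neg_distrib]
    rw [Finset.sum_comm]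
    refine Finset.sum_congr rfl fun x _ => ?_
    rw [← Finset.sum_neg_distrib]
    refine Finset.sum_congr rfl fun y _ => ?_
    rw [hsym]; ring
  have : 2 * En c φ ψ = (∑ x, ∑ y, c x y * ((φ x - φ y) * ψ x)) -
      ∑ x, ∑ y, c x y * ((φ x - φ y) * ψ y) := by
    rw [two_mul]
    nth_rewrite 1 [h1]
    rw [h2]; ring
  rw [this, ← Finset.sum_sub_distrib]
  refine Finset.sum_congr rfl fun x _ => ?_
  rw [← Finset.sum_sub_distrib]
  exact Finset.sum_congr rfl fun y _ => by ring

theorem En_symm (hsym : ∀ a b, c a b = c b a) (φ ψ : W → ℝ) :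
    En c φ ψ = En c ψ φ := by
  have h := En_repr c hsym φ ψ
  have h2 := En_repr c hsym ψ φ
  have : ∑ x, ∑ y, c x y * ((φ x - φ y) * (ψ x - ψ y)) =
      ∑ x, ∑ y, c x y * ((ψ x - ψ y) * (φ x - φ y)) :=
    Finset.sum_congr rfl fun x _ => Finset.sum_congr rfl fun y _ => by ring
  nlinarith [h, h2, this]

theorem green {x y : W} {φ : W → ℝ}
    (hφ : ∀ z, Lc c φ z = (if z = x then 1 else 0) - (if z = y then 1 else 0)) (ψ : W → ℝ) :
    En c φ ψ = ψ x - ψ y := by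
  unfold En
  simp only [hφ, sub_mul, ite_mul, one_mul, zero_mul]
  rw [Finset.sum_sub_distrib, Finset.sum_ite_eq', Finset.sum_ite_eq']
  simp

theorem harmonic_const (hw : IsWeight c) (hc : Conn c) {φ : W → ℝ}
    (h : ∀ z, Lc c φ z = 0) : ∀ a b, φ a = φ b := by
  have hE : En c φ φ = 0 := by
    unfold En; simp only [h, zero_mul]; simp
  have hQ : ∑ x, ∑ y, c x y * ((φ x - φ y) * (φ x - φ y)) = 0 := by
    rw [← En_repr c hw.2.1, hE, mul_zero]
  have hterm : ∀ x y : W, 0 < c x y → φ x = φ y := by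
    rw [← Finset.sum_product'] at hQ
    have hnn : ∀ p ∈ (Finset.univ ×ˢ Finset.univ : Finset (W × W)),
        0 ≤ c p.1 p.2 * ((φ p.1 - φ p.2) * (φ p.1 - φ p.2)) :=
      fun p _ => mul_nonneg (hw.1 p.1 p.2) (mul_self_nonneg _)
    have := (Finset.sum_eq_zero_iff_of_nonneg hnn).mp hQ
    intro x y hxy
    have h0 := this (x, y) (by simp)
    simp only at h0
    have := mul_eq_zero.mp h0
    rcases this with h | h
    · exact absurd h hxy.ne'
    · have := mul_self_eq_zero.mp h
      linarith
  intro a b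
  induction hc a b with
  | refl => rfl
  | tail _ h2 ih => exact ih.trans (hterm _ _ h2)

theorem Lc_sub (φ ψ : W → ℝ) (z : W) :
    Lc c (φ - ψ) z = Lc c φ z - Lc c ψ z := by
  unfold Lc
  rw [← Finset.sum_sub_distrib]
  exact Finset.sum_congr rfl fun y _ => by simp; ring

theorem sub_harm (hw : IsWeight c) (hc : Conn c) {φ ψ : W → ℝ}
    (h : ∀ z, Lc c φ z = Lc c ψ z) : ∀ a b, φ a - ψ a = φ b - ψ b := by
  have := harmonic_const c hw hc (φ := φ - ψ) (fun z => by rw [Lc_sub, h, sub_self])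
  intro a b; simpa using this a b

theorem Lc_congr {φ ψ : W → ℝ} (h : ∀ a b, φ a - φ b = ψ a - ψ b) (t : W) :
    Lc c φ t = Lc c ψ t := by
  unfold Lc
  exact Finset.sum_congr rfl fun y _ => by rw [h t y]

theorem Lc_sum {ι : Type*} (s : Finset ι) (a : ι → ℝ) (f : ι → W → ℝ) (t : W) :
    Lc c (fun z => ∑ x ∈ s, a x * f x z) t = ∑ x ∈ s, a x * Lc c (f x) t := by
  unfold Lc
  have : ∀ y, c t y * ((∑ x ∈ s, a x * f x t) - ∑ x ∈ s, a x * f x y)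
      = ∑ x ∈ s, a x * (c t y * (f x t - f x y)) := by
    intro y
    rw [← Finset.sum_sub_distrib, Finset.mul_sum]
    exact Finset.sum_congr rfl fun x _ => by ring
  simp only [this]
  rw [Finset.sum_comm]
  exact Finset.sum_congr rfl fun x _ => by rw [Finset.mul_sum]

theorem Lc_ind {a b : W} (hab : a ≠ b) :
    Lc c (fun t => if t = b then (1:ℝ) else 0) a = -(c a b) := by
  unfold Lc
  simp only [if_neg hab, mul_ite, mul_one, mul_zero, zero_sub, mul_neg]
  simp [Finset.sum_ite_eq']

theorem effres_sol [Nontrivial W] {R : W → W → ℝ} (hw : IsWeight c) (hc : Conn c)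
    (he : IsEffRes c R) :
    ∀ x y, x ≠ y → ∃ φ : W → ℝ,
      (∀ z, Lc c φ z = (if z = x then 1 else 0) - (if z = y then 1 else 0)) ∧
      φ y = 0 ∧ φ x = R x y := by
  intro x y hxy
  obtain ⟨φ, hφ, hφx⟩ := he.2 x y hxy
  have hdeg : ∀ z, 0 < deg c z := fun z => by
    obtain ⟨w, hw'⟩ := exists_ne z
    exact deg_pos c hw hc (Ne.symm hw')
  rw [dirichlet_iff_comb c hdeg] at hφ
  exact ⟨φ, hφ.1, hφ.2, hφx⟩

theorem sol_eq_H [Nontrivial W] {R : W → W → ℝ} (hw : IsWeight c) (hc : Conn c)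
    (he : IsEffRes c R) {o x : W} (hxo : x ≠ o) {φ : W → ℝ}
    (hφ : ∀ z, Lc c φ z = (if z = x then 1 else 0) - (if z = o then 1 else 0))
    (hφ0 : φ o = 0) (hφx : φ x = R x o) :
    ∀ z, φ z = (R x o + R z o - R x z) / 2 := by
  intro z
  by_cases hzo : z = o
  · subst hzo
    rw [hφ0, he.1 z]
    ring
  by_cases hzx : z = x
  · subst hzx
    rw [hφx, he.1 z]
    ring
  · obtain ⟨φz, hφz, hφz0, hφzx⟩ := effres_sol c hw hc he z o hzo
    obtain ⟨ψ, hψ, hψ0, hψx⟩ := effres_sol c hw hc he x z (Ne.symm hzx)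
    -- reciprocity: φ z = φz x
    have hrec : φ z = φz x := by
      have h1 : En c φz φ = φ z - φ o := green c hφz φ
      have h2 : En c φ φz = φz x - φz o := green c hφ φz
      rw [En_symm c hw.2.1, hφ0] at h1
      rw [hφz0] at h2
      rw [h1] at h2
      linarith
    -- superposition
    have hsame : ∀ t, Lc c ψ t = Lc c (φ - φz) t := by
      intro t
      rw [Lc_sub, hφ t, hφz t, hψ t]
      ring
    have hconst := sub_harm c hw hc hsame x z
    simp only [Pi.sub_apply] at hconst
    rw [hψx, hψ0, hφx, ← hrec, hφzx] at hconst
    linarith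

end Basic

section Unique
variable {W : Type*} [Fintype W] [DecidableEq W]

theorem weights_unique (c₁ c₂ : W → W → ℝ) {R : W → W → ℝ}
    (hw₁ : IsWeight c₁) (hc₁ : Conn c₁) (he₁ : IsEffRes c₁ R)
    (hw₂ : IsWeight c₂) (hc₂ : Conn c₂) (he₂ : IsEffRes c₂ R) :
    ∀ a b, c₁ a b = c₂ a b := by
  by_cases hnt : Nontrivial W
  case neg =>
    intro a b
    have hab : a = b := by
      by_contra h; exact hnt ⟨⟨a, b, h⟩⟩
    subst hab; rw [hw₁.2.2, hw₂.2.2]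
  case pos =>
  have o : W := Classical.arbitrary W
  set H : W → W → ℝ := fun x z => (R x o + R z o - R x z) / 2 with hHdef
  have key : ∀ (cc : W → W → ℝ), IsWeight cc → Conn cc → IsEffRes cc R → ∀ x, x ≠ o →
      (∀ t, Lc cc (H x) t = (if t = x then 1 else 0) - (if t = o then 1 else 0)) := by
    intro cc hwc hcc hec x hx
    obtain ⟨φ, h1, h2, h3⟩ := effres_sol cc hwc hcc hec x o hx
    have hφH : φ = H x := funext (sol_eq_H cc hwc hcc hec hx h1 h2 h3)
    intro t; rw [← hφH]; exact h1 t
  have key2 : ∀ (g : W → ℝ) (t : W), Lc c₁ g t = Lc c₂ g t := by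
    intro g
    set G : W → ℝ := fun z => ∑ x ∈ Finset.univ.erase o, (Lc c₁ g x) * H x z with hG
    set val : W → ℝ := fun t => ∑ x ∈ Finset.univ.erase o,
      Lc c₁ g x * ((if t = x then 1 else 0) - (if t = o then 1 else 0)) with hval0
    have hLcc : ∀ (cc : W → W → ℝ), IsWeight cc → Conn cc → IsEffRes cc R →
        ∀ t, Lc cc G t = val t := by
      intro cc hwc hcc hec t
      rw [hG]
      rw [Lc_sum cc (Finset.univ.erase o) (fun x => Lc c₁ g x) (fun x => H x) t]
      exact Finset.sum_congr rfl fun x hx => by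
        rw [key cc hwc hcc hec x (Finset.ne_of_mem_erase hx) t]
    have hval : ∀ t, val t = Lc c₁ g t := by
      intro t
      by_cases ht : t = o
      · subst ht
        have e1 : val t = ∑ x ∈ Finset.univ.erase t, (- Lc c₁ g x) := by
          rw [hval0]
          exact Finset.sum_congr rfl fun x hx => by
            rw [if_neg (Ne.symm (Finset.ne_of_mem_erase hx)), if_pos rfl]; ring
        rw [e1, Finset.sum_neg_distrib,
          Finset.sum_erase_eq_sub (Finset.mem_univ t),
          sum_Lc_zero c₁ hw₁.2.1 g]
        ring
      · have e1 : val t = ∑ x ∈ Finset.univ.erase o,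
            (if t = x then Lc c₁ g x else 0) := by
          rw [hval0]
          exact Finset.sum_congr rfl fun x hx => by
            rw [if_neg ht]; by_cases h : t = x <;> simp [h]
        rw [e1, Finset.sum_ite_eq, if_pos (Finset.mem_erase.mpr ⟨ht, Finset.mem_univ t⟩)]
    have hgG : ∀ a b, G a - G b = g a - g b := by
      have hs := sub_harm c₁ hw₁ hc₁ (φ := g) (ψ := G)
        (fun t => ((hLcc c₁ hw₁ hc₁ he₁ t).trans (hval t)).symm)
      intro a b; have h := hs a b; linarith
    intro t
    calc Lc c₁ g t = val t := (hval t).symm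
      _ = Lc c₂ G t := (hLcc c₂ hw₂ hc₂ he₂ t).symm
      _ = Lc c₂ g t := Lc_congr c₂ hgG t
  intro a b
  rcases eq_or_ne a b with h | h
  · subst h; rw [hw₁.2.2, hw₂.2.2]
  · have hk := key2 (fun t => if t = b then (1:ℝ) else 0) a
    rw [Lc_ind c₁ h, Lc_ind c₂ h] at hk
    linarith

end Unique

section Elim
variable {W : Type*} [Fintype W] [DecidableEq W]

noncomputable def elim (c : W → W → ℝ) (w : W) : W → W → ℝ :=
  fun a b => if a = w ∨ b = w ∨ a = b then 0 else c a b + c a w * c w b / deg c w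

variable (c : W → W → ℝ) (w : W)

theorem subsum (F : W → ℝ) :
    ∑ b : {z : W // z ≠ w}, F b.1 = ∑ b ∈ Finset.univ.erase w, F b := by
  rw [Finset.sum_subtype (p := fun z => z ≠ w) (Finset.univ.erase w) (fun x => by simp) F]

theorem deg_nonneg (hnn : ∀ a b, 0 ≤ c a b) (x : W) : 0 ≤ deg c x :=
  Finset.sum_nonneg fun y _ => hnn x y

theorem elim_nonneg (hw : IsWeight c) (a b : W) : 0 ≤ elim c w a b := by
  unfold elim
  split
  · exact le_refl 0
  · have h1 : 0 ≤ c a b := hw.1 a b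
    have h2 : 0 ≤ c a w * c w b / deg c w :=
      div_nonneg (mul_nonneg (hw.1 a w) (hw.1 w b)) (deg_nonneg c hw.1 w)
    linarith

theorem elim_symm (hw : IsWeight c) (a b : W) : elim c w a b = elim c w b a := by
  unfold elim
  have hcond : (a = w ∨ b = w ∨ a = b) ↔ (b = w ∨ a = w ∨ b = a) := by
    constructor <;> rintro (h | h | h) <;> subst h <;> tauto
  rw [if_congr hcond rfl rfl]
  split
  · rfl
  · rw [hw.2.1 a b, hw.2.1 a w, hw.2.1 w b]; ring

theorem elim_diag (a : W) : elim c w a a = 0 := by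
  unfold elim; simp

theorem elim_ge (hw : IsWeight c) {a b : W} (ha : a ≠ w) (hb : b ≠ w) :
    c a b ≤ elim c w a b := by
  unfold elim
  rcases eq_or_ne a b with h | h
  · subst h; rw [hw.2.2, if_pos (Or.inr (Or.inr rfl))]
  · rw [if_neg (by tauto)]
    have : 0 ≤ c a w * c w b / deg c w :=
      div_nonneg (mul_nonneg (hw.1 a w) (hw.1 w b)) (deg_nonneg c hw.1 w)
    linarith

theorem elim_isWeight (hw : IsWeight c) :
    IsWeight (fun a b : {z : W // z ≠ w} => elim c w a.1 b.1) :=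
  ⟨fun a b => elim_nonneg c w hw a.1 b.1, fun a b => elim_symm c w hw a.1 b.1,
    fun a => elim_diag c w a.1⟩

theorem elim_deg_le (hw : IsWeight c) (hD : 0 < deg c w) {a : W} (ha : a ≠ w) :
    (∑ b : {z : W // z ≠ w}, elim c w a b.1) ≤ deg c a := by
  rw [subsum w (fun b => elim c w a b)]
  have step : ∀ b ∈ Finset.univ.erase w,
      elim c w a b ≤ c a b + c a w * c w b / deg c w := by
    intro b _
    unfold elim
    split
    · have h1 : 0 ≤ c a b := hw.1 a b
      have h2 : 0 ≤ c a w * c w b / deg c w :=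
        div_nonneg (mul_nonneg (hw.1 a w) (hw.1 w b)) (deg_nonneg c hw.1 w)
      linarith
    · exact le_refl _
  refine le_trans (Finset.sum_le_sum step) ?_
  rw [Finset.sum_add_distrib]
  have e1 : ∑ b ∈ Finset.univ.erase w, c a b = deg c a - c a w := by
    rw [Finset.sum_erase_eq_sub (Finset.mem_univ w)]; rfl
  have e2 : ∑ b ∈ Finset.univ.erase w, c a w * c w b / deg c w = c a w := by
    have : ∀ b, c a w * c w b / deg c w = (c a w / deg c w) * c w b := fun b => by ring
    simp only [this]
    rw [← Finset.mul_sum, Finset.sum_erase_eq_sub (Finset.mem_univ w), hw.2.2 w, sub_zero]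
    rw [show (∑ b, c w b) = deg c w from rfl, div_mul_cancel₀ _ hD.ne']
  rw [e1, e2]
  linarith

theorem elim_conn (hw : IsWeight c) (hc : Conn c) (hD : 0 < deg c w) :
    Conn (fun a b : {z : W // z ≠ w} => elim c w a.1 b.1) := by
  set r' : {z : W // z ≠ w} → {z : W // z ≠ w} → Prop :=
    fun s t => 0 < elim c w s.1 t.1 with hr'
  have key : ∀ u v : W, Relation.ReflTransGen (fun s t => 0 < c s t) u v → ∀ hu : u ≠ w,
      (∀ hv : v ≠ w, Relation.ReflTransGen r' ⟨u, hu⟩ ⟨v, hv⟩) ∧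
      (v = w → ∀ t, ∀ ht : t ≠ w, 0 < c w t →
        Relation.ReflTransGen r' ⟨u, hu⟩ ⟨t, ht⟩) := by
    intro u v h
    induction h with
    | refl =>
      intro hu
      exact ⟨fun hv => Relation.ReflTransGen.refl,
        fun hvw => absurd hvw hu⟩
    | @tail m v hum hmv ih =>
      intro hu
      by_cases hm : m = w
      · subst hm
        constructor
        · intro hv
          exact (ih hu).2 rfl v hv hmv
        · intro hvw
          rw [hvw, hw.2.2] at hmv
          exact absurd hmv (lt_irrefl 0)
      · constructor
        · intro hv
          rcases eq_or_ne m v with he | hne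
          · subst he; exact (ih hu).1 hv
          · refine Relation.ReflTransGen.tail ((ih hu).1 hm) ?_
            show 0 < elim c w m v
            have h1 : c m v ≤ elim c w m v := elim_ge c w hw hm hv
            linarith
        · intro hvw t ht hwt
          rw [hvw] at hmv
          rcases eq_or_ne m t with he | hne
          · subst he; exact (ih hu).1 ht
          · refine Relation.ReflTransGen.tail ((ih hu).1 hm) ?_
            show 0 < elim c w m t
            have h1 : elim c w m t = c m t + c m w * c w t / deg c w := by
              unfold elim; rw [if_neg (by tauto)]
            have h2 : 0 < c m w * c w t / deg c w := div_pos (mul_pos hmv hwt) hD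
            have h3 : 0 ≤ c m t := hw.1 m t
            rw [h1]; linarith
  intro a b
  have := (key a.1 b.1 (hc a.1 b.1) a.2).1 b.2
  simpa using this

theorem elim_effres [Nontrivial W] {R : W → W → ℝ} (hw : IsWeight c) (hc : Conn c)
    (he : IsEffRes c R) (hdeg : ∀ z, 0 < deg c z) :
    IsEffRes (fun a b : {z : W // z ≠ w} => elim c w a.1 b.1)
      (fun a b : {z : W // z ≠ w} => R a.1 b.1) := by
  set c' : {z : W // z ≠ w} → {z : W // z ≠ w} → ℝ :=
    fun a b => elim c w a.1 b.1 with hc'def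
  constructor
  · exact fun x => he.1 x.1
  · intro x y hxy
    have hxy1 : x.1 ≠ y.1 := fun h => hxy (Subtype.ext h)
    obtain ⟨φ, hφ, hφ0, hφx⟩ := effres_sol c hw hc he x.1 y.1 hxy1
    have hnt' : Nontrivial {z : W // z ≠ w} := ⟨⟨x, y, hxy⟩⟩
    have hw' : IsWeight c' := elim_isWeight c w hw
    have hconn' : Conn c' := elim_conn c w hw hc (hdeg w)
    have hdeg' : ∀ z : {z : W // z ≠ w}, 0 < deg c' z := by
      intro z
      obtain ⟨t, htz⟩ := exists_ne z
      exact deg_pos c' hw' hconn' (Ne.symm htz)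
    refine ⟨fun z => φ z.1, ?_, hφx⟩
    rw [dirichlet_iff_comb c' hdeg']
    refine ⟨?_, hφ0⟩
    intro a
    have hharm : Lc c φ w = 0 := by
      rw [hφ w, if_neg (fun h => x.2 h.symm), if_neg (fun h => y.2 h.symm)]
      ring
    have hD : deg c w ≠ 0 := (hdeg w).ne'
    -- compute the combinatorial Laplacian of the restricted function
    have main : Lc c' (fun z => φ z.1) a = Lc c φ a.1 := by
      unfold Lc
      rw [subsum w (fun b => elim c w a.1 b * (φ a.1 - φ b))]
      have step : ∀ b ∈ Finset.univ.erase w,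
          elim c w a.1 b * (φ a.1 - φ b) =
            c a.1 b * (φ a.1 - φ b) +
              (c a.1 w / deg c w) * (c w b * (φ a.1 - φ b)) := by
        intro b hb
        have hbw : b ≠ w := Finset.ne_of_mem_erase hb
        rcases eq_or_ne a.1 b with hab | hab
        · rw [← hab, elim_diag, hw.2.2, sub_self]
          ring
        · unfold elim
          rw [if_neg (by push_neg; exact ⟨a.2, hbw, hab⟩)]
          ring
      rw [Finset.sum_congr rfl step, Finset.sum_add_distrib]
      have e1 : ∑ b ∈ Finset.univ.erase w, c a.1 b * (φ a.1 - φ b) =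
          Lc c φ a.1 - c a.1 w * (φ a.1 - φ w) := by
        rw [Finset.sum_erase_eq_sub (Finset.mem_univ w)]; rfl
      have e2 : ∑ b ∈ Finset.univ.erase w,
          (c a.1 w / deg c w) * (c w b * (φ a.1 - φ b)) =
            c a.1 w * (φ a.1 - φ w) := by
        rw [← Finset.mul_sum, Finset.sum_erase_eq_sub (Finset.mem_univ w), hw.2.2 w,
          zero_mul, sub_zero]
        have e3 : ∑ b, c w b * (φ a.1 - φ b) =
            (φ a.1 - φ w) * deg c w + Lc c φ w := by
          unfold Lc deg
          rw [Finset.mul_sum, ← Finset.sum_add_distrib]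
          exact Finset.sum_congr rfl fun b _ => by ring
        rw [e3, hharm, add_zero]
        field_simp
      rw [e1, e2, sub_add_cancel]
      rfl
    rw [main, hφ a.1]
    have g1 : ((a:W) = ↑x) ↔ (a = x) := Iff.symm Subtype.ext_iff
    have g2 : ((a:W) = ↑y) ↔ (a = y) := Iff.symm Subtype.ext_iff
    rw [if_congr g1 rfl rfl, if_congr g2 rfl rfl]

end Elim

section Transport
variable {A B : Type*} [Fintype A] [DecidableEq A] [Fintype B] [DecidableEq B]

theorem transport (e : A ≃ B) (c : A → A → ℝ) (R' : B → B → ℝ)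
    (hw : IsWeight c) (hc : Conn c) (he : IsEffRes c (fun a a' => R' (e a) (e a'))) :
    IsWeight (fun b b' => c (e.symm b) (e.symm b')) ∧
    Conn (fun b b' => c (e.symm b) (e.symm b')) ∧
    IsEffRes (fun b b' => c (e.symm b) (e.symm b')) R' := by
  set c₂ : B → B → ℝ := fun b b' => c (e.symm b) (e.symm b') with hc₂
  have hdegeq : ∀ b, deg c₂ b = deg c (e.symm b) := by
    intro b
    unfold deg
    exact Equiv.sum_comp e.symm (fun a => c (e.symm b) a)
  refine ⟨⟨fun a b => hw.1 _ _, fun a b => hw.2.1 _ _, fun a => hw.2.2 _⟩, ?_, ?_, ?_⟩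
  · intro b b'
    have h := Relation.ReflTransGen.lift (r := fun a a' => 0 < c a a')
      (p := fun b b' : B => 0 < c₂ b b') e
      (fun a a' h => by simpa [hc₂, Function.onFun] using h) _ _ (hc (e.symm b) (e.symm b'))
    simpa [Function.onFun] using h
  · intro b
    have := he.1 (e.symm b)
    simpa using this
  · intro x y hxy
    have hA : (e.symm x) ≠ (e.symm y) := fun h => hxy (by simpa using congrArg e h)
    have hntA : Nontrivial A := ⟨⟨e.symm x, e.symm y, hA⟩⟩
    obtain ⟨φ, hφ, hφ0, hφx⟩ := effres_sol c hw hc he (e.symm x) (e.symm y) hA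
    have hdegA : ∀ a, 0 < deg c a := fun a => by
      obtain ⟨t, ht⟩ := exists_ne a
      exact deg_pos c hw hc (Ne.symm ht)
    have hdeg₂ : ∀ b, 0 < deg c₂ b := fun b => by rw [hdegeq]; exact hdegA _
    have hnt₂ : Nontrivial B := ⟨⟨x, y, hxy⟩⟩
    refine ⟨fun b => φ (e.symm b), ?_, by simpa using hφx⟩
    rw [dirichlet_iff_comb c₂ hdeg₂]
    refine ⟨?_, hφ0⟩
    intro b
    have hLc : Lc c₂ (fun b => φ (e.symm b)) b = Lc c φ (e.symm b) := by
      unfold Lc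
      exact Equiv.sum_comp e.symm (fun a => c (e.symm b) a * (φ (e.symm b) - φ a))
    rw [hLc, hφ (e.symm b)]
    have g1 : (e.symm b = e.symm x) ↔ (b = x) := Equiv.apply_eq_iff_eq e.symm
    have g2 : (e.symm b = e.symm y) ↔ (b = y) := Equiv.apply_eq_iff_eq e.symm
    rw [if_congr g1 rfl rfl, if_congr g2 rfl rfl]

end Transport

theorem compAux (n : ℕ) {A B : Type u} [Fintype A] [DecidableEq A] [Fintype B]
    [DecidableEq B] (hcard : Fintype.card B ≤ n)
    (f : A → B) (hf : Function.Injective f)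
    (cA : A → A → ℝ) (cB : B → B → ℝ) (RB : B → B → ℝ)
    (hwA : IsWeight cA) (hcA : Conn cA) (heA : IsEffRes cA (fun a a' => RB (f a) (f a')))
    (hwB : IsWeight cB) (hcB : Conn cB) (heB : IsEffRes cB RB) :
    (∀ a a', cB (f a) (f a') ≤ cA a a') ∧ (∀ a, deg cA a ≤ deg cB (f a)) := by
  induction n generalizing A B with
  | zero =>
    have : IsEmpty B := Fintype.card_eq_zero_iff.mp (Nat.le_zero.mp hcard)
    exact ⟨fun a => (this.false (f a)).elim, fun a => (this.false (f a)).elim⟩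
  | succ n ih =>
    rcases isEmpty_or_nonempty A with hA | hA
    · exact ⟨fun a => isEmptyElim a, fun a => isEmptyElim a⟩
    by_cases hsurj : Function.Surjective f
    · -- f is a bijection: use uniqueness
      set e := Equiv.ofBijective f ⟨hf, hsurj⟩ with he_def
      have heA' : IsEffRes cA (fun a a' => RB (e a) (e a')) := heA
      obtain ⟨hw₂, hc₂, he₂⟩ := transport e cA RB hwA hcA heA'
      have huniq := weights_unique (fun b b' => cA (e.symm b) (e.symm b')) cB
        hw₂ hc₂ he₂ hwB hcB heB
      constructor
      · intro a a'
        have h1 : cA (e.symm (f a)) (e.symm (f a')) = cB (f a) (f a') := huniq (f a) (f a')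
        have hfe : ∀ t, f t = e t := fun _ => rfl
        rw [hfe a, hfe a', e.symm_apply_apply a, e.symm_apply_apply a'] at h1
        rw [hfe a, hfe a']
        exact le_of_eq h1.symm
      · intro a
        have : deg cB (f a) = deg cA a := by
          unfold deg
          have hstep : ∀ b, cB (f a) b = cA (e.symm (f a)) (e.symm b) :=
            fun b => (huniq (f a) b).symm
          have hfe : e.symm (f a) = a := e.symm_apply_apply a
          calc ∑ b, cB (f a) b = ∑ b, cA (e.symm (f a)) (e.symm b) :=
                Finset.sum_congr rfl (fun b _ => hstep b)
            _ = ∑ b, cA a (e.symm b) := by rw [hfe]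
            _ = ∑ a', cA a a' := Equiv.sum_comp e.symm (fun a' => cA a a')
        exact le_of_eq this.symm
    · -- there is a vertex w outside the range of f: eliminate it
      obtain ⟨w, hwr⟩ : ∃ w : B, ∀ a, f a ≠ w := by
        rw [Function.Surjective] at hsurj
        push_neg at hsurj
        obtain ⟨w, hw⟩ := hsurj
        exact ⟨w, fun a h => hw a h⟩
      have hntB : Nontrivial B := by
        obtain ⟨a⟩ := hA
        exact ⟨⟨f a, w, hwr a⟩⟩
      have hdegB : ∀ z, 0 < deg cB z := fun z => by
        obtain ⟨t, ht⟩ := exists_ne z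
        exact deg_pos cB hwB hcB (Ne.symm ht)
      set f' : A → {z : B // z ≠ w} := fun a => ⟨f a, hwr a⟩ with hf'_def
      have hf' : Function.Injective f' := fun a a' h => hf (congrArg Subtype.val h)
      have hcard' : Fintype.card {z : B // z ≠ w} ≤ n := by
        have hlt : Fintype.card {z : B // z ≠ w} < Fintype.card B :=
          Fintype.card_subtype_lt (x := w) (by simp)
        omega
      have := ih hcard' f' hf' cA (fun a b : {z : B // z ≠ w} => elim cB w a.1 b.1)
        (fun a b : {z : B // z ≠ w} => RB a.1 b.1)
        hwA hcA heA
        (elim_isWeight cB w hwB) (elim_conn cB w hwB hcB (hdegB w))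
        (elim_effres cB w hwB hcB heB hdegB)
      constructor
      · intro a a'
        refine le_trans ?_ (this.1 a a')
        exact elim_ge cB w hwB (hwr a) (hwr a')
      · intro a
        refine le_trans (this.2 a) ?_
        exact elim_deg_le cB w hwB (hdegB w) (hwr a)

theorem keyStep {V : Type u} [DecidableEq V] (R : V → V → ℝ) (Vm Vn : Finset V)
    (hsub : Vm ⊆ Vn) (cm cn : V → V → ℝ)
    (hwm : IsWeight fun a b : ↥Vm => cm a.1 b.1)
    (hcm : Conn fun a b : ↥Vm => cm a.1 b.1)
    (hem : IsEffRes (fun a b : ↥Vm => cm a.1 b.1) (fun a b : ↥Vm => R a.1 b.1))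
    (hwn : IsWeight fun a b : ↥Vn => cn a.1 b.1)
    (hcn : Conn fun a b : ↥Vn => cn a.1 b.1)
    (hen : IsEffRes (fun a b : ↥Vn => cn a.1 b.1) (fun a b : ↥Vn => R a.1 b.1)) :
    (∀ a b : ↥Vm, cn a.1 b.1 ≤ cm a.1 b.1) ∧
    (∀ a : ↥Vm, (∑ b : ↥Vm, cm a.1 b.1) ≤ ∑ b : ↥Vn, cn a.1 b.1) := by
  set f : ↥Vm → ↥Vn := fun a => ⟨a.1, hsub a.2⟩ with hf_def
  have hf : Function.Injective f := by
    intro a b h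
    have h2 : (f a).1 = (f b).1 := congrArg Subtype.val h
    exact Subtype.ext h2
  have := compAux (Fintype.card ↥Vn) (le_refl _) f hf
    (fun a b : ↥Vm => cm a.1 b.1) (fun a b : ↥Vn => cn a.1 b.1)
    (fun a b : ↥Vn => R a.1 b.1) hwm hcm hem hwn hcn hen
  exact ⟨fun a b => this.1 a b, fun a => this.2 a⟩

open Filter ENNReal

theorem stmt18 {V : Type*} [DecidableEq V] [Infinite V] [Countable V]
    (R : V → V → ℝ) (hR : ∀ x y, 0 ≤ R x y)
    (Vseq : ℕ → Finset V) (hmono : ∀ n, Vseq n ⊆ Vseq (n + 1))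
    (hexh : ∀ v : V, ∃ n, v ∈ Vseq n)
    (c : ℕ → V → V → ℝ)
    (hw : ∀ n, IsWeight fun a b : ↥(Vseq n) => c n a.1 b.1)
    (hconn : ∀ n, Conn fun a b : ↥(Vseq n) => c n a.1 b.1)
    (heff : ∀ n, IsEffRes (fun a b : ↥(Vseq n) => c n a.1 b.1)
      (fun a b : ↥(Vseq n) => R a.1 b.1)) :
    ∀ x y : V,
      (∃ N : ℕ, ∀ m n : ℕ, N ≤ m → m ≤ n → c n x y ≤ c m x y) ∧
      (∃ L : ℝ, 0 ≤ L ∧ Tendsto (fun n => c n x y) atTop (nhds L)) ∧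
      (∃ N : ℕ, ∀ m n : ℕ, N ≤ m → m ≤ n →
        (∑ z : ↥(Vseq m), c m x z.1) ≤ ∑ z : ↥(Vseq n), c n x z.1) ∧
      (∃ L : ℝ≥0∞, 0 < L ∧
        Tendsto (fun n => ENNReal.ofReal (∑ z : ↥(Vseq n), c n x z.1))
          atTop (nhds L)) := by
  have Vsub : ∀ m n, m ≤ n → Vseq m ⊆ Vseq n := fun m n h =>
    monotone_nat_of_le_succ hmono h
  intro x y
  obtain ⟨nx, hnx⟩ := hexh x
  obtain ⟨ny, hny⟩ := hexh y
  obtain ⟨z, hzx⟩ := exists_ne x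
  obtain ⟨nz, hnz⟩ := hexh z
  set N₁ := max nx ny with hN₁
  have hxN₁ : ∀ n, N₁ ≤ n → x ∈ Vseq n := fun n h =>
    Vsub nx n (le_trans (le_max_left _ _) h) hnx
  have hyN₁ : ∀ n, N₁ ≤ n → y ∈ Vseq n := fun n h =>
    Vsub ny n (le_trans (le_max_right _ _) h) hny
  set N₂ := max nx nz with hN₂
  have hxN₂ : ∀ n, N₂ ≤ n → x ∈ Vseq n := fun n h =>
    Vsub nx n (le_trans (le_max_left _ _) h) hnx
  have hzN₂ : ∀ n, N₂ ≤ n → z ∈ Vseq n := fun n h =>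
    Vsub nz n (le_trans (le_max_right _ _) h) hnz
  have key1 : ∀ m n, N₁ ≤ m → m ≤ n → c n x y ≤ c m x y := by
    intro m n hm hmn
    have h := keyStep R (Vseq m) (Vseq n) (Vsub m n hmn) (c m) (c n)
      (hw m) (hconn m) (heff m) (hw n) (hconn n) (heff n)
    exact h.1 ⟨x, hxN₁ m hm⟩ ⟨y, hyN₁ m hm⟩
  have key2 : ∀ m n, N₂ ≤ m → m ≤ n →
      (∑ b : ↥(Vseq m), c m x b.1) ≤ ∑ b : ↥(Vseq n), c n x b.1 := by
    intro m n hm hmn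
    have h := keyStep R (Vseq m) (Vseq n) (Vsub m n hmn) (c m) (c n)
      (hw m) (hconn m) (heff m) (hw n) (hconn n) (heff n)
    exact h.2 ⟨x, hxN₂ m hm⟩
  refine ⟨⟨N₁, key1⟩, ?_, ⟨N₂, key2⟩, ?_⟩
  · set g : ℕ → ℝ := fun k => c (k + N₁) x y with hg
    have hanti : Antitone g := fun k l hkl =>
      key1 (k + N₁) (l + N₁) (Nat.le_add_left _ _) (by omega)
    have hbdd : BddBelow (Set.range g) := by
      refine ⟨0, ?_⟩
      rintro _ ⟨k, rfl⟩
      exact (hw (k + N₁)).1 ⟨x, hxN₁ _ (Nat.le_add_left _ _)⟩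
        ⟨y, hyN₁ _ (Nat.le_add_left _ _)⟩
    have htend : Tendsto g atTop (nhds (⨅ k, g k)) := tendsto_atTop_ciInf hanti hbdd
    refine ⟨⨅ k, g k, ?_, ?_⟩
    · exact le_ciInf fun k => (hw (k + N₁)).1 ⟨x, hxN₁ _ (Nat.le_add_left _ _)⟩
        ⟨y, hyN₁ _ (Nat.le_add_left _ _)⟩
    · exact (tendsto_add_atTop_iff_nat (f := fun n => c n x y) N₁).mp htend
  · set s : ℕ → ℝ := fun n => ∑ b : ↥(Vseq n), c n x b.1 with hs
    set t : ℕ → ℝ≥0∞ := fun k => ENNReal.ofReal (s (k + N₂)) with ht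
    have hmonot : Monotone t := fun k l hkl =>
      ENNReal.ofReal_le_ofReal
        (key2 (k + N₂) (l + N₂) (Nat.le_add_left _ _) (by omega))
    have htend : Tendsto t atTop (nhds (⨆ k, t k)) := tendsto_atTop_iSup hmonot
    refine ⟨⨆ k, t k, ?_, ?_⟩
    · have hspos : 0 < s N₂ := by
        have hne : (⟨x, hxN₂ N₂ le_rfl⟩ : ↥(Vseq N₂)) ≠ ⟨z, hzN₂ N₂ le_rfl⟩ :=
          fun h => hzx (congrArg Subtype.val h).symm
        exact deg_pos (fun a b : ↥(Vseq N₂) => c N₂ a.1 b.1) (hw N₂) (hconn N₂) hne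
      have h0 : 0 < t 0 := by
        rw [ht]
        simp only [zero_add]
        exact ENNReal.ofReal_pos.mpr hspos
      exact lt_of_lt_of_le h0 (le_iSup t 0)
    · exact (tendsto_add_atTop_iff_nat
        (f := fun n => ENNReal.ofReal (∑ b : ↥(Vseq n), c n x b.1)) N₂).mp htend
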